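/- Let p be a prime and let a_1, a_2, a_3 be integers with 1 ≤ a_1 ≤ a_2 ≤ a_3. If b is an integer with a_2 < b ≤ a_1 + a_2 ≤ a_3, then the number h_b of subgroups of order p^b in ℤ/p^{a_1} × ℤ/p^{a_2} × ℤ/p^{a_3} satisfies h_b · (p-1)(p^2-1) = (b-a_2+1)·p^{a_1+a_2+3} + p^{a_1+a_2+2} - (b-a_2)·p^{a_1+a_2+1} - p^{2a_1+2} - p^{b+2} - p^{b+1} + 1. -/

import Mathlib

open AddSubgroup DirectSum
open scoped DirectSum

namespace Rank3C4


variable {A C : Type*} [AddCommGroup A] [AddCommGroup C]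

/-- The subgroup of `A × C` built from `P ≤ A`, `T ≤ C` and `φ : P →+ C ⧸ T`. -/
def glue (P : AddSubgroup A) (T : AddSubgroup C) (φ : P →+ C ⧸ T) : AddSubgroup (A × C) where
  carrier := {x | ∃ h : x.1 ∈ P, (x.2 : C ⧸ T) = φ ⟨x.1, h⟩}
  zero_mem' := ⟨P.zero_mem, by
    have : (⟨(0 : A), P.zero_mem⟩ : P) = 0 := rfl
    show ((0 : C) : C ⧸ T) = φ ⟨0, P.zero_mem⟩
    rw [this, map_zero]; rfl⟩
  add_mem' := by
    rintro ⟨a, c⟩ ⟨a', c'⟩ ⟨ha, hc⟩ ⟨ha', hc'⟩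
    refine ⟨P.add_mem ha ha', ?_⟩
    show ((c + c' : C) : C ⧸ T) = φ ⟨a + a', P.add_mem ha ha'⟩
    have : (⟨a + a', P.add_mem ha ha'⟩ : P) = ⟨a, ha⟩ + ⟨a', ha'⟩ := rfl
    rw [this, map_add, ← hc, ← hc']
    rfl
  neg_mem' := by
    rintro ⟨a, c⟩ ⟨ha, hc⟩
    refine ⟨P.neg_mem ha, ?_⟩
    show ((-c : C) : C ⧸ T) = φ ⟨-a, P.neg_mem ha⟩
    have : (⟨-a, P.neg_mem ha⟩ : P) = -⟨a, ha⟩ := rfl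
    rw [this, map_neg, ← hc]
    rfl

lemma mem_glue {P : AddSubgroup A} {T : AddSubgroup C} {φ : P →+ C ⧸ T} {x : A × C} :
    x ∈ glue P T φ ↔ ∃ h : x.1 ∈ P, (x.2 : C ⧸ T) = φ ⟨x.1, h⟩ := Iff.rfl

/-- `glue P T φ` is in bijection with `P × T`. -/
noncomputable def glueEquiv (P : AddSubgroup A) (T : AddSubgroup C) (φ : P →+ C ⧸ T) :
    glue P T φ ≃ P × T where
  toFun x :=
    ⟨⟨x.1.1, x.2.choose⟩, ⟨x.1.2 - (φ ⟨x.1.1, x.2.choose⟩).out, by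
      rw [← QuotientAddGroup.eq_zero_iff (N := T), QuotientAddGroup.mk_sub,
        QuotientAddGroup.out_eq', ← x.2.choose_spec, sub_self]⟩⟩
  invFun y :=
    ⟨(y.1.1, y.2.1 + (φ y.1).out), by
      refine ⟨y.1.2, ?_⟩
      show ((y.2.1 + (φ y.1).out : C) : C ⧸ T) = φ ⟨y.1.1, y.1.2⟩
      rw [QuotientAddGroup.mk_add, QuotientAddGroup.out_eq',
        (QuotientAddGroup.eq_zero_iff (N := T) y.2.1).2 y.2.2, zero_add]⟩
  left_inv := by
    rintro ⟨⟨a, c⟩, hx⟩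
    ext
    · rfl
    · show c - (φ ⟨a, hx.choose⟩).out + (φ ⟨a, hx.choose⟩).out = c
      simp
  right_inv := by
    rintro ⟨⟨a, ha⟩, ⟨t, ht⟩⟩
    ext
    · rfl
    · show t + (φ ⟨a, ha⟩).out - (φ ⟨a, ha⟩).out = t
      simp

lemma card_glue (P : AddSubgroup A) (T : AddSubgroup C) (φ : P →+ C ⧸ T) :
    Nat.card (glue P T φ) = Nat.card P * Nat.card T := by
  rw [Nat.card_congr (glueEquiv P T φ), Nat.card_prod]

lemma fst_mem_iff {P : AddSubgroup A} {T : AddSubgroup C} {φ : P →+ C ⧸ T} {a : A} :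
    a ∈ P ↔ ∃ c, (a, c) ∈ glue P T φ := by
  constructor
  · intro ha
    exact ⟨(φ ⟨a, ha⟩).out, mem_glue.2 ⟨ha, QuotientAddGroup.out_eq' _⟩⟩
  · rintro ⟨c, hc⟩
    exact (mem_glue.1 hc).choose

lemma snd_mem_iff {P : AddSubgroup A} {T : AddSubgroup C} {φ : P →+ C ⧸ T} {c : C} :
    c ∈ T ↔ ((0 : A), c) ∈ glue P T φ := by
  constructor
  · intro hc
    refine mem_glue.2 ⟨P.zero_mem, ?_⟩
    have h0 : (⟨(0 : A), P.zero_mem⟩ : P) = 0 := rfl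
    rw [h0, map_zero, QuotientAddGroup.eq_zero_iff]
    exact hc
  · rintro hc
    obtain ⟨h0, he⟩ := mem_glue.1 hc
    have h0' : (⟨(0 : A), h0⟩ : P) = 0 := rfl
    rw [h0', map_zero] at he
    exact (QuotientAddGroup.eq_zero_iff _).1 he

lemma glue_val {P : AddSubgroup A} {T : AddSubgroup C} {φ : P →+ C ⧸ T} {a : A} {c : C}
    (h : (a, c) ∈ glue P T φ) (ha : a ∈ P) : φ ⟨a, ha⟩ = (c : C ⧸ T) := by
  obtain ⟨ha', he⟩ := mem_glue.1 h
  exact he.symm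

lemma glue_injective :
    Function.Injective
      (fun x : Σ (P : AddSubgroup A), Σ (T : AddSubgroup C), (P →+ C ⧸ T) =>
        glue x.1 x.2.1 x.2.2) := by
  rintro ⟨P, T, φ⟩ ⟨P', T', φ'⟩ (h : glue P T φ = glue P' T' φ')
  have hP : P = P' := by
    ext a
    rw [fst_mem_iff (T := T) (φ := φ), fst_mem_iff (T := T') (φ := φ'), h]
  subst hP
  have hT : T = T' := by
    ext c
    rw [snd_mem_iff (P := P) (φ := φ), snd_mem_iff (P := P) (φ := φ'), h]
  subst hT
  have hφ : φ = φ' := by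
    ext x
    obtain ⟨a, ha⟩ := x
    have hm : (a, (φ ⟨a, ha⟩).out) ∈ glue P T φ :=
      mem_glue.2 ⟨ha, QuotientAddGroup.out_eq' _⟩
    rw [h] at hm
    have h2 := glue_val hm ha
    rw [h2, QuotientAddGroup.out_eq']
  subst hφ
  rfl

lemma glue_surjective (H : AddSubgroup (A × C)) :
    ∃ (P : AddSubgroup A) (T : AddSubgroup C) (φ : P →+ C ⧸ T), glue P T φ = H := by
  classical
  set P : AddSubgroup A := H.map (AddMonoidHom.fst A C) with hPdef
  set T : AddSubgroup C := H.comap (AddMonoidHom.inr A C) with hTdef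
  have memP : ∀ a : A, a ∈ P ↔ ∃ c : C, (a, c) ∈ H := by
    intro a
    simp only [hPdef, AddSubgroup.mem_map, AddMonoidHom.coe_fst]
    constructor
    · rintro ⟨⟨a', c⟩, hm, rfl⟩; exact ⟨c, hm⟩
    · rintro ⟨c, hm⟩; exact ⟨(a, c), hm, rfl⟩
  have memT : ∀ c : C, c ∈ T ↔ ((0 : A), c) ∈ H := by
    intro c
    simp only [hTdef, AddSubgroup.mem_comap, AddMonoidHom.inr_apply]
  -- choose a section
  have sec : ∀ x : P, ∃ c : C, ((x : A), c) ∈ H := fun x => (memP x).1 x.2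
  choose f hf using sec
  -- well-definedness: the class of f x in C ⧸ T depends only on x
  have wd : ∀ (a : A) (c c' : C), (a, c) ∈ H → (a, c') ∈ H → ((c : C ⧸ T) = (c' : C ⧸ T)) := by
    intro a c c' hc hc'
    rw [QuotientAddGroup.eq]
    rw [memT]
    have := H.add_mem (H.neg_mem hc) hc'
    simpa using this
  refine ⟨P, T, AddMonoidHom.mk' (fun x => ((f x : C) : C ⧸ T)) ?_, ?_⟩
  · intro x y
    have hxy : ((((x + y : P) : A)), f x + f y) ∈ H := by
      have := H.add_mem (hf x) (hf y)
      simpa using this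
    have h5 := wd _ _ _ (hf (x + y)) hxy
    show ((f (x + y) : C) : C ⧸ T) = ((f x : C) : C ⧸ T) + ((f y : C) : C ⧸ T)
    rw [h5, QuotientAddGroup.mk_add]
  · ext ⟨a, c⟩
    rw [mem_glue]
    constructor
    · rintro ⟨ha, he⟩
      have hfa := hf ⟨a, ha⟩
      -- he : (c : C ⧸ T) = (f ⟨a, ha⟩ : C ⧸ T)
      have he' : ((c : C) : C ⧸ T) = ((f ⟨a, ha⟩ : C) : C ⧸ T) := he
      rw [QuotientAddGroup.eq] at he'
      rw [memT] at he'
      have h3 := H.sub_mem hfa he'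
      have h4 : ((a, f ⟨a, ha⟩) - ((0 : A), -c + f ⟨a, ha⟩) : A × C) = (a, c) := by
        apply Prod.ext
        · simp
        · show f ⟨a, ha⟩ - (-c + f ⟨a, ha⟩) = c
          abel
      exact h4 ▸ h3
    · intro hm
      have ha : a ∈ P := (memP a).2 ⟨c, hm⟩
      refine ⟨ha, ?_⟩
      exact (wd a c (f ⟨a, ha⟩) hm (hf ⟨a, ha⟩))

instance {G : Type*} [AddGroup G] [Finite G] : Finite (AddSubgroup G) :=
  Finite.of_injective (SetLike.coe) SetLike.coe_injective

instance {M N : Type*} [AddZeroClass M] [AddZeroClass N] [Finite M] [Finite N] :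
    Finite (M →+ N) :=
  Finite.of_injective (DFunLike.coe) DFunLike.coe_injective

noncomputable instance fintypeAddSubgroup {G : Type*} [AddGroup G] [Finite G] :
    Fintype (AddSubgroup G) := Fintype.ofFinite _

lemma card_sigma_eq {ι : Type*} [Fintype ι] (f : ι → Type*) [∀ i, Finite (f i)] :
    Nat.card (Σ i, f i) = ∑ i, Nat.card (f i) := by
  letI : ∀ i, Fintype (f i) := fun i => Fintype.ofFinite _
  rw [Nat.card_eq_fintype_card, Fintype.card_sigma]
  exact Finset.sum_congr rfl fun i _ => (Nat.card_eq_fintype_card).symm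

lemma card_subtype_const {α : Type*} [Finite α] (q : Prop) [Decidable q] :
    Nat.card {_x : α // q} = if q then Nat.card α else 0 := by
  split_ifs with h
  · exact Nat.card_congr (Equiv.subtypeUnivEquiv fun _ => h)
  · haveI : IsEmpty {_x : α // q} := ⟨fun x => h x.2⟩
    simp

theorem card_subgroups [Finite A] [Finite C] (n : ℕ) :
    Nat.card {H : AddSubgroup (A × C) // Nat.card H = n}
      = ∑ P : AddSubgroup A, ∑ T : AddSubgroup C,
          (if Nat.card P * Nat.card T = n then Nat.card (P →+ C ⧸ T) else 0) := by
  classical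
  have bij : Function.Bijective
      (fun x : Σ (P : AddSubgroup A), Σ (T : AddSubgroup C), (P →+ C ⧸ T) =>
        glue x.1 x.2.1 x.2.2) := by
    refine ⟨glue_injective, fun H => ?_⟩
    obtain ⟨P, T, φ, h⟩ := glue_surjective H
    exact ⟨⟨P, T, φ⟩, h⟩
  have e1 : {x : Σ (P : AddSubgroup A), Σ (T : AddSubgroup C), (P →+ C ⧸ T) //
      Nat.card x.1 * Nat.card x.2.1 = n} ≃ {H : AddSubgroup (A × C) // Nat.card H = n} :=
    Equiv.subtypeEquiv (Equiv.ofBijective _ bij) (fun x => by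
      simp only [Equiv.ofBijective_apply, card_glue])
  have e2 : {x : Σ (P : AddSubgroup A), Σ (T : AddSubgroup C), (P →+ C ⧸ T) //
      Nat.card x.1 * Nat.card x.2.1 = n}
      ≃ Σ (P : AddSubgroup A), Σ (T : AddSubgroup C),
          {_φ : P →+ C ⧸ T // Nat.card P * Nat.card T = n} :=
    { toFun := fun x => ⟨x.1.1, x.1.2.1, x.1.2.2, x.2⟩
      invFun := fun y => ⟨⟨y.1, y.2.1, y.2.2.1⟩, y.2.2.2⟩
      left_inv := fun ⟨⟨P, T, φ⟩, h⟩ => rfl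
      right_inv := fun ⟨P, T, φ, h⟩ => rfl }
  rw [← Nat.card_congr e1, Nat.card_congr e2, card_sigma_eq]
  refine Finset.sum_congr rfl fun P _ => ?_
  rw [card_sigma_eq]
  refine Finset.sum_congr rfl fun T _ => ?_
  exact card_subtype_const _



/-- The `m`-torsion subgroup of `ZMod N`. -/
def tors (N m : ℕ) : AddSubgroup (ZMod N) := (AddMonoidHom.mulLeft ((m : ℕ) : ZMod N)).ker

lemma mem_tors {N m : ℕ} {x : ZMod N} : x ∈ tors N m ↔ ((m : ℕ) : ZMod N) * x = 0 :=
  AddMonoidHom.mem_ker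

lemma mem_tors' {N m : ℕ} {x : ZMod N} : x ∈ tors N m ↔ m • x = 0 := by
  rw [mem_tors, nsmul_eq_mul]

lemma range_mulLeft (N m : ℕ) [NeZero N] :
    (AddMonoidHom.mulLeft ((m : ℕ) : ZMod N)).range
      = AddSubgroup.zmultiples ((m : ℕ) : ZMod N) := by
  ext y
  constructor
  · rintro ⟨x, rfl⟩
    rw [AddSubgroup.mem_zmultiples_iff]
    refine ⟨(x.val : ℤ), ?_⟩
    rw [natCast_zsmul, nsmul_eq_mul, ZMod.natCast_val, ZMod.cast_id]
    exact mul_comm _ _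
  · intro hy
    obtain ⟨k, rfl⟩ := AddSubgroup.mem_zmultiples_iff.1 hy
    exact ⟨(k : ZMod N), by rw [zsmul_eq_mul]; exact mul_comm _ _⟩

lemma card_tors_gcd (N m : ℕ) (hN : N ≠ 0) : Nat.card (tors N m) = N.gcd m := by
  haveI : NeZero N := ⟨hN⟩
  have h1 : Nat.card (ZMod N) =
      Nat.card (ZMod N ⧸ tors N m) * Nat.card (tors N m) :=
    AddSubgroup.card_eq_card_quotient_mul_card_addSubgroup _
  have h2 : Nat.card (ZMod N ⧸ tors N m)
      = Nat.card (AddMonoidHom.mulLeft ((m : ℕ) : ZMod N)).range :=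
    Nat.card_congr (QuotientAddGroup.quotientKerEquivRange _).toEquiv
  rw [range_mulLeft] at h2
  rw [Nat.card_zmod] at h1
  rw [h2, Nat.card_zmultiples, ZMod.addOrderOf_coe m hN] at h1
  have hdvd : N.gcd m ∣ N := Nat.gcd_dvd_left _ _
  have hpos : 0 < N / N.gcd m :=
    Nat.div_pos (Nat.le_of_dvd (Nat.pos_of_ne_zero hN) hdvd) (Nat.pos_of_ne_zero
      (fun h => hN (by simpa [h] using Nat.eq_zero_of_gcd_eq_zero_left h)))
  have h3 : N / N.gcd m * N.gcd m = N := Nat.div_mul_cancel hdvd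
  exact Nat.eq_of_mul_eq_mul_left hpos (h1.symm.trans h3.symm)

lemma card_tors (N m : ℕ) (hN : N ≠ 0) (hm : m ∣ N) : Nat.card (tors N m) = m := by
  rw [card_tors_gcd N m hN, Nat.gcd_eq_right hm]

lemma eq_tors (N : ℕ) (hN : N ≠ 0) (T : AddSubgroup (ZMod N)) : T = tors N (Nat.card T) := by
  haveI : NeZero N := ⟨hN⟩
  have hle : T ≤ tors N (Nat.card T) := by
    intro x hx
    rw [mem_tors']
    have h0 : Nat.card T • (⟨x, hx⟩ : T) = 0 := card_nsmul_eq_zero'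
    have h1 : Nat.card T • x = ((Nat.card T • (⟨x, hx⟩ : T) : T) : ZMod N) := rfl
    rw [h1, h0]
    exact ZeroMemClass.coe_zero T
  have hdvd : Nat.card T ∣ N := by
    have := AddSubgroup.card_addSubgroup_dvd_card T
    rwa [Nat.card_zmod] at this
  refine AddSubgroup.eq_of_le_of_card_ge hle ?_
  rw [card_tors N _ hN hdvd]

/-- Subgroups of `ZMod (p ^ a)` are indexed by `Fin (a + 1)`. -/
noncomputable def subgroupEquiv (p a : ℕ) (hp : p.Prime) :
    Fin (a + 1) ≃ AddSubgroup (ZMod (p ^ a)) := by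
  have hN : p ^ a ≠ 0 := pow_ne_zero _ hp.pos.ne'
  refine Equiv.ofBijective (fun d => tors (p ^ a) (p ^ (d : ℕ))) ⟨?_, ?_⟩
  · intro d e h
    have h' : tors (p ^ a) (p ^ (d : ℕ)) = tors (p ^ a) (p ^ (e : ℕ)) := h
    have hd : Nat.card (tors (p ^ a) (p ^ (d : ℕ))) = p ^ (d : ℕ) :=
      card_tors _ _ hN (pow_dvd_pow p (Nat.lt_succ_iff.1 d.2))
    have he : Nat.card (tors (p ^ a) (p ^ (e : ℕ))) = p ^ (e : ℕ) :=
      card_tors _ _ hN (pow_dvd_pow p (Nat.lt_succ_iff.1 e.2))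
    rw [h'] at hd
    rw [he] at hd
    exact Fin.ext (Nat.pow_right_injective hp.two_le hd.symm)
  · intro T
    have hdvd : Nat.card T ∣ p ^ a := by
      have := AddSubgroup.card_addSubgroup_dvd_card T
      rwa [Nat.card_zmod] at this
    obtain ⟨d, hd, hcard⟩ := (Nat.dvd_prime_pow hp).1 hdvd
    refine ⟨⟨d, Nat.lt_succ_of_le hd⟩, ?_⟩
    show tors (p ^ a) (p ^ d) = T
    rw [← hcard, ← eq_tors _ hN]

lemma card_subgroupEquiv (p a : ℕ) (hp : p.Prime) (d : Fin (a + 1)) :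
    Nat.card (subgroupEquiv p a hp d) = p ^ (d : ℕ) := by
  show Nat.card (tors (p ^ a) (p ^ (d : ℕ))) = _
  exact card_tors _ _ (pow_ne_zero _ hp.pos.ne') (pow_dvd_pow p (Nat.lt_succ_iff.1 d.2))

lemma card_quotient_tors (p a : ℕ) (hp : p.Prime) (d : Fin (a + 1)) :
    Nat.card (ZMod (p ^ a) ⧸ subgroupEquiv p a hp d) = p ^ (a - (d : ℕ)) := by
  have h1 : Nat.card (ZMod (p ^ a)) =
      Nat.card (ZMod (p ^ a) ⧸ subgroupEquiv p a hp d) * Nat.card (subgroupEquiv p a hp d) :=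
    AddSubgroup.card_eq_card_quotient_mul_card_addSubgroup _
  rw [Nat.card_zmod, card_subgroupEquiv] at h1
  have hd : (d : ℕ) ≤ a := Nat.lt_succ_iff.1 d.2
  have : p ^ a = p ^ (a - (d : ℕ)) * p ^ (d : ℕ) := by
    rw [← pow_add]; congr 1; omega
  have hpd : 0 < p ^ (d : ℕ) := pow_pos hp.pos _
  exact Nat.eq_of_mul_eq_mul_right hpd (h1.symm.trans this)

/-- Counting homs out of `ZMod n`: they correspond to `n`-torsion points. -/
lemma card_hom_zmod (n : ℕ) (B : Type*) [AddCommGroup B] :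
    Nat.card (ZMod n →+ B) = Nat.card {b : B // n • b = 0} := by
  refine (Nat.card_congr ?_).symm
  refine Equiv.trans ?_ (ZMod.lift n)
  refine Equiv.subtypeEquiv (zmultiplesHom B) fun b => ?_
  rw [zmultiplesHom_apply, natCast_zsmul]

/-- Counting torsion in a finite cyclic group. -/
lemma card_torsion_cyclic (B : Type*) [AddCommGroup B] [Finite B] (hB : IsAddCyclic B) (m : ℕ) :
    Nat.card {b : B // m • b = 0} = (Nat.card B).gcd m := by
  have e : ZMod (Nat.card B) ≃+ B := zmodAddCyclicAddEquiv hB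
  have e2 : {x : ZMod (Nat.card B) // m • x = 0} ≃ {b : B // m • b = 0} := by
    refine Equiv.subtypeEquiv e.toEquiv fun x => ?_
    constructor
    · intro h
      show m • e x = 0
      rw [← map_nsmul, h, map_zero]
    · intro h
      have : e (m • x) = e 0 := by rw [map_nsmul, map_zero]; exact h
      exact e.injective this
  rw [← Nat.card_congr e2]
  have e3 : {x : ZMod (Nat.card B) // m • x = 0} ≃ tors (Nat.card B) m := by
    refine Equiv.subtypeEquiv (Equiv.refl _) fun x => ?_
    rw [Equiv.refl_apply, mem_tors']
  rw [Nat.card_congr e3, card_tors_gcd _ _ Nat.card_pos.ne']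

/-- Precomposition with an `AddEquiv` gives an equivalence of hom sets. -/
def homCongrLeft {M N B : Type*} [AddCommGroup M] [AddCommGroup N] [AddCommGroup B]
    (e : M ≃+ N) : (M →+ B) ≃ (N →+ B) where
  toFun f := f.comp e.symm.toAddMonoidHom
  invFun f := f.comp e.toAddMonoidHom
  left_inv f := by ext x; simp
  right_inv f := by ext x; simp

/-- Homs out of a finite direct sum. -/
def homDirectSum {ι : Type} [Fintype ι] [DecidableEq ι] (M : ι → Type*)
    [∀ i, AddCommMonoid (M i)] (B : Type*) [AddCommMonoid B] :
    ((⨁ i, M i) →+ B) ≃ (∀ i, M i →+ B) where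
  toFun F i := F.comp (DirectSum.of M i)
  invFun f := DirectSum.toAddMonoid f
  left_inv F := by
    refine DirectSum.addHom_ext fun i x => ?_
    simp [DirectSum.toAddMonoid_of]
  right_inv f := by
    funext i
    ext x
    simp [DirectSum.toAddMonoid_of]

/-- Counting homs from a finite abelian group into a cyclic group whose order is divisible
by the exponent of the source. -/
lemma card_hom_into_cyclic (G : Type*) [AddCommGroup G] [Finite G] (B : Type*) [AddCommGroup B]
    [Finite B] (hB : IsAddCyclic B) (h : ∀ x : G, Nat.card B • x = 0) :
    Nat.card (G →+ B) = Nat.card G := by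
  classical
  obtain ⟨ι, fι, q, hq, e, ⟨eqv⟩⟩ := AddCommGroup.equiv_directSum_zmod_of_finite G
  letI := fι
  haveI : Finite (DirectSum ι fun i => ZMod (q i ^ e i)) := Finite.of_equiv G eqv.toEquiv
  haveI : ∀ i, Finite (ZMod (q i ^ e i)) := fun i =>
    Finite.of_injective (DirectSum.of (fun i => ZMod (q i ^ e i)) i) (DirectSum.of_injective i)
  have hne : ∀ i, q i ^ e i ≠ 0 := by
    intro i h0
    haveI : Finite (ZMod 0) := h0 ▸ (inferInstance : Finite (ZMod (q i ^ e i)))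
    exact not_finite (ZMod 0)
  -- each q i ^ e i divides Nat.card B
  have hdvd : ∀ i, q i ^ e i ∣ Nat.card B := by
    intro i
    have hx := h (eqv.symm (DirectSum.of (fun i => ZMod (q i ^ e i)) i 1))
    have horder : addOrderOf (eqv.symm (DirectSum.of (fun i => ZMod (q i ^ e i)) i 1))
        = q i ^ e i := by
      rw [AddEquiv.addOrderOf_eq,
        addOrderOf_injective (DirectSum.of (fun i => ZMod (q i ^ e i)) i)
          (DirectSum.of_injective i), ZMod.addOrderOf_one]
    rw [← horder]
    exact addOrderOf_dvd_of_nsmul_eq_zero hx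
  have e1 : (G →+ B) ≃ ∀ i, (ZMod (q i ^ e i) →+ B) :=
    (homCongrLeft eqv).trans (homDirectSum _ B)
  rw [Nat.card_congr e1, Nat.card_pi]
  have hcardi : ∀ i, Nat.card (ZMod (q i ^ e i) →+ B) = q i ^ e i := by
    intro i
    rw [card_hom_zmod, card_torsion_cyclic B hB, Nat.gcd_eq_right (hdvd i)]
  rw [Finset.prod_congr rfl fun i _ => hcardi i]
  have h3 : Nat.card (DirectSum ι fun i => ZMod (q i ^ e i))
      = ∏ i, Nat.card (ZMod (q i ^ e i)) :=
    (Nat.card_congr (DFinsupp.equivFunOnFintype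
      (β := fun i => ZMod (q i ^ e i)))).trans Nat.card_pi
  have h2 : Nat.card G = ∏ i, q i ^ e i := by
    rw [Nat.card_congr eqv.toEquiv, h3]
    exact Finset.prod_congr rfl fun i _ => Nat.card_zmod _
  exact h2.symm

lemma card_hom_cyclic_cyclic (P B : Type*) [AddCommGroup P] [Finite P] [AddCommGroup B]
    [Finite B] (hP : IsAddCyclic P) (hB : IsAddCyclic B) :
    Nat.card (P →+ B) = (Nat.card B).gcd (Nat.card P) := by
  rw [← Nat.card_congr (homCongrLeft (B := B) (zmodAddCyclicAddEquiv hP)),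
    card_hom_zmod, card_torsion_cyclic B hB]

lemma gcd_pow_pow (p a b : ℕ) (hp : p.Prime) : (p ^ a).gcd (p ^ b) = p ^ min a b := by
  rcases le_total a b with h | h
  · rw [Nat.gcd_eq_left (pow_dvd_pow p h), min_eq_left h]
  · rw [Nat.gcd_eq_right (pow_dvd_pow p h), min_eq_right h]

/-- The rank-2 subgroup count as a double sum. -/
lemma rank2_count (p x y : ℕ) (hp : p.Prime) (s : ℕ) :
    Nat.card {P : AddSubgroup (ZMod (p ^ x) × ZMod (p ^ y)) // Nat.card P = p ^ s}
      = ∑ u : Fin (x + 1), ∑ d : Fin (y + 1),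
          (if (u : ℕ) + (d : ℕ) = s then p ^ min (u : ℕ) (y - (d : ℕ)) else 0) := by
  haveI : NeZero (p ^ x) := ⟨pow_ne_zero _ hp.pos.ne'⟩
  haveI : NeZero (p ^ y) := ⟨pow_ne_zero _ hp.pos.ne'⟩
  rw [card_subgroups (p ^ s)]
  rw [← Equiv.sum_comp (subgroupEquiv p x hp)
    (fun P : AddSubgroup (ZMod (p ^ x)) => ∑ T : AddSubgroup (ZMod (p ^ y)),
      if Nat.card P * Nat.card T = p ^ s then Nat.card (P →+ ZMod (p ^ y) ⧸ T) else 0)]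
  refine Finset.sum_congr rfl fun u _ => ?_
  rw [← Equiv.sum_comp (subgroupEquiv p y hp)
    (fun T : AddSubgroup (ZMod (p ^ y)) =>
      if Nat.card ((subgroupEquiv p x hp u : AddSubgroup (ZMod (p ^ x)))) * Nat.card T = p ^ s
      then Nat.card ((subgroupEquiv p x hp u : AddSubgroup (ZMod (p ^ x))) →+ ZMod (p ^ y) ⧸ T)
      else 0)]
  refine Finset.sum_congr rfl fun d _ => ?_
  rw [card_subgroupEquiv, card_subgroupEquiv]
  have hcond : (u : ℕ) + (d : ℕ) = s ↔ p ^ (u : ℕ) * p ^ (d : ℕ) = p ^ s := by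
    rw [← pow_add]
    exact ⟨fun h => by rw [h], fun h => Nat.pow_right_injective hp.two_le h⟩
  by_cases hc : (u : ℕ) + (d : ℕ) = s
  · rw [if_pos hc, if_pos (hcond.1 hc)]
    haveI : IsAddCyclic (ZMod (p ^ y) ⧸ (subgroupEquiv p y hp d : AddSubgroup (ZMod (p ^ y)))) :=
      isAddCyclic_of_surjective _ (QuotientAddGroup.mk'_surjective _)
    rw [card_hom_cyclic_cyclic _ _ inferInstance inferInstance,
      card_quotient_tors, card_subgroupEquiv, gcd_pow_pow _ _ _ hp, min_comm]
  · rw [if_neg hc, if_neg (fun h => hc (hcond.2 h))]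

/-- Top-level: reduce the rank-3 count to a sum over subgroups of the rank-2 group. -/
lemma rank3_reduce (p x y z b : ℕ) (hp : p.Prime) [NeZero (p ^ x)] [NeZero (p ^ y)]
    [NeZero (p ^ z)] (hxyz : x + y ≤ z) (hbz : b ≤ z) :
    Nat.card {H : AddSubgroup ((ZMod (p ^ x) × ZMod (p ^ y)) × ZMod (p ^ z)) //
        Nat.card H = p ^ b}
      = ∑ P : AddSubgroup (ZMod (p ^ x) × ZMod (p ^ y)),
          (if Nat.card P ∣ p ^ b then Nat.card P else 0) := by
  rw [card_subgroups (p ^ b)]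
  refine Finset.sum_congr rfl fun P _ => ?_
  -- card P is a power of p
  have hdvd : Nat.card P ∣ p ^ (x + y) := by
    have h1 := AddSubgroup.card_addSubgroup_dvd_card P
    rwa [Nat.card_prod, Nat.card_zmod, Nat.card_zmod, ← pow_add] at h1
  obtain ⟨s, hsxy, hs⟩ := (Nat.dvd_prime_pow hp).1 hdvd
  rw [← Equiv.sum_comp (subgroupEquiv p z hp)
    (fun T : AddSubgroup (ZMod (p ^ z)) =>
      if Nat.card P * Nat.card T = p ^ b then Nat.card (P →+ ZMod (p ^ z) ⧸ T) else 0)]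
  by_cases hsb : s ≤ b
  · -- exactly one d works: d = b - s
    have hbs : b - s < z + 1 := by omega
    have key : ∀ d : Fin (z + 1),
        (if Nat.card P * Nat.card (subgroupEquiv p z hp d) = p ^ b
          then Nat.card (P →+ ZMod (p ^ z) ⧸ (subgroupEquiv p z hp d : AddSubgroup (ZMod (p ^ z))))
          else 0)
        = if d = ⟨b - s, hbs⟩ then Nat.card P else 0 := by
      intro d
      rw [card_subgroupEquiv, hs, ← pow_add]
      by_cases hd : d = ⟨b - s, hbs⟩
      · subst hd
        have hcond : p ^ (s + ((b - s : ℕ))) = p ^ b := by congr 1; omega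
        rw [if_pos hcond, if_pos rfl]
        -- compute the hom count
        haveI : IsAddCyclic (ZMod (p ^ z) ⧸
            (subgroupEquiv p z hp ⟨b - s, hbs⟩ : AddSubgroup (ZMod (p ^ z)))) :=
          isAddCyclic_of_surjective _ (QuotientAddGroup.mk'_surjective _)
        refine (card_hom_into_cyclic _ _ inferInstance fun w => ?_).trans hs
        rw [card_quotient_tors]
        have hexp : (z - (b - s)) = s + (z - b) := by omega
        rw [hexp, pow_add, mul_nsmul]
        have h0 : p ^ s • w = 0 := by
          rw [← hs]
          exact card_nsmul_eq_zero'
        rw [h0, nsmul_zero]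
      · rw [if_neg hd, if_neg]
        intro hcond
        have : s + (d : ℕ) = b := Nat.pow_right_injective hp.two_le hcond
        apply hd
        apply Fin.ext
        simp only []
        omega
    rw [Finset.sum_congr rfl fun d _ => key d, Finset.sum_ite_eq' Finset.univ _ _]
    rw [if_pos (Finset.mem_univ _), if_pos (by rw [hs]; exact pow_dvd_pow p hsb)]
  · -- no d works
    rw [if_neg (by rw [hs]; exact fun h => hsb ((Nat.pow_dvd_pow_iff_le_right hp.one_lt).1 h))]
    refine Finset.sum_eq_zero fun d _ => ?_
    rw [if_neg]
    rw [card_subgroupEquiv, hs, ← pow_add]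
    intro hcond
    have : s + (d : ℕ) = b := Nat.pow_right_injective hp.two_le hcond
    omega

lemma group_by_card (p x y b : ℕ) (hp : p.Prime) [NeZero (p ^ x)] [NeZero (p ^ y)] :
    ∑ P : AddSubgroup (ZMod (p ^ x) × ZMod (p ^ y)),
        (if Nat.card P ∣ p ^ b then Nat.card P else 0)
      = ∑ s ∈ Finset.range (x + y + 1), (if s ≤ b then p ^ s else 0) *
          Nat.card {P : AddSubgroup (ZMod (p ^ x) × ZMod (p ^ y)) // Nat.card P = p ^ s} := by
  classical
  set c : AddSubgroup (ZMod (p ^ x) × ZMod (p ^ y)) → ℕ :=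
    fun P => (Nat.card P).factorization p with hc
  have hcard : ∀ P : AddSubgroup (ZMod (p ^ x) × ZMod (p ^ y)),
      Nat.card P = p ^ c P ∧ c P ≤ x + y := by
    intro P
    have hdvd : Nat.card P ∣ p ^ (x + y) := by
      have h1 := AddSubgroup.card_addSubgroup_dvd_card P
      rwa [Nat.card_prod, Nat.card_zmod, Nat.card_zmod, ← pow_add] at h1
    obtain ⟨s, hsxy, hs⟩ := (Nat.dvd_prime_pow hp).1 hdvd
    have hcs : c P = s := by
      rw [hc]
      simp only [hs, hp.factorization_pow, Finsupp.single_eq_same]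
    rw [hcs, ← hs]
    exact ⟨rfl, hsxy⟩
  have maps : ∀ P ∈ Finset.univ, c P ∈ Finset.range (x + y + 1) := fun P _ =>
    Finset.mem_range.2 (Nat.lt_succ_of_le (hcard P).2)
  rw [← Finset.sum_fiberwise_of_maps_to maps
    (fun P => if Nat.card P ∣ p ^ b then Nat.card P else 0)]
  refine Finset.sum_congr rfl fun s hs => ?_
  have hfil : Finset.filter (fun P => c P = s) Finset.univ
      = Finset.filter (fun P : AddSubgroup (ZMod (p ^ x) × ZMod (p ^ y)) =>
          Nat.card P = p ^ s) Finset.univ := by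
    ext P
    simp only [Finset.mem_filter, Finset.mem_univ, true_and]
    constructor
    · intro h; rw [(hcard P).1, h]
    · intro h
      show (Nat.card P).factorization p = s
      rw [h]
      simp only [hp.factorization_pow, Finsupp.single_eq_same]
  rw [hfil]
  have hconst : ∀ P ∈ Finset.filter (fun P : AddSubgroup (ZMod (p ^ x) × ZMod (p ^ y)) =>
      Nat.card P = p ^ s) Finset.univ,
      (if Nat.card P ∣ p ^ b then Nat.card P else 0) = (if s ≤ b then p ^ s else 0) := by
    intro P hP
    have hcp : Nat.card P = p ^ s := (Finset.mem_filter.1 hP).2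
    rw [hcp]
    by_cases hle : s ≤ b
    · rw [if_pos hle, if_pos (pow_dvd_pow p hle)]
    · rw [if_neg hle, if_neg (fun h => hle ((Nat.pow_dvd_pow_iff_le_right hp.one_lt).1 h))]
  rw [Finset.sum_congr rfl hconst, Finset.sum_const, smul_eq_mul, mul_comm]
  congr 1
  rw [Nat.card_eq_fintype_card, Fintype.card_subtype]

/-- Transfer subgroup counting along an additive equivalence. -/
lemma card_subgroups_congr {M N : Type*} [AddCommGroup M] [AddCommGroup N] (e : M ≃+ N)
    (n : ℕ) :
    Nat.card {H : AddSubgroup M // Nat.card H = n}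
      = Nat.card {H : AddSubgroup N // Nat.card H = n} := by
  have comp_id : ∀ (K : AddSubgroup M),
      (K.map e.toAddMonoidHom).map e.symm.toAddMonoidHom = K := by
    intro K
    rw [AddSubgroup.map_map]
    have : (e.symm.toAddMonoidHom.comp e.toAddMonoidHom) = AddMonoidHom.id M := by
      ext g; simp
    rw [this, AddSubgroup.map_id]
  have comp_id' : ∀ (K : AddSubgroup N),
      (K.map e.symm.toAddMonoidHom).map e.toAddMonoidHom = K := by
    intro K
    rw [AddSubgroup.map_map]
    have : (e.toAddMonoidHom.comp e.symm.toAddMonoidHom) = AddMonoidHom.id N := by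
      ext g; simp
    rw [this, AddSubgroup.map_id]
  refine Nat.card_congr (Equiv.subtypeEquiv
    ⟨fun H => H.map e.toAddMonoidHom, fun K => K.map e.symm.toAddMonoidHom,
      comp_id, comp_id'⟩ fun H => ?_)
  show Nat.card H = n ↔ Nat.card (H.map e.toAddMonoidHom) = n
  rw [Nat.card_congr (AddSubgroup.equivMapOfInjective H e.toAddMonoidHom
    (e.injective)).toEquiv]



lemma inner_eval (p x y s : ℕ) (hs : s ≤ x + y) :
    (∑ u ∈ Finset.range (x + 1), ∑ d ∈ Finset.range (y + 1),
        if u + d = s then p ^ min u (y - d) else 0)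
      = ∑ j ∈ Finset.range (min s x + min s y - s + 1), p ^ j := by
  have step1 : ∀ u ∈ Finset.range (x + 1),
      (∑ d ∈ Finset.range (y + 1), if u + d = s then p ^ min u (y - d) else 0)
      = if u ≤ s ∧ s - u ≤ y then p ^ min u (y - (s - u)) else 0 := by
    intro u _
    by_cases hu : u ≤ s ∧ s - u ≤ y
    · have hmem : s - u ∈ Finset.range (y + 1) := Finset.mem_range.2 (by omega)
      have hbody : ∀ d, (if u + d = s then p ^ min u (y - d) else 0)
          = if d = s - u then p ^ min u (y - d) else 0 := fun d =>
        if_congr (by omega) rfl rfl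
      rw [Finset.sum_congr rfl fun d _ => hbody d,
        Finset.sum_ite_eq' (Finset.range (y + 1)) (s - u) (fun d => p ^ min u (y - d)),
        if_pos hmem, if_pos hu]
    · rw [if_neg hu]
      refine Finset.sum_eq_zero fun d hd => ?_
      rw [Finset.mem_range] at hd
      rw [if_neg]
      omega
  rw [Finset.sum_congr rfl step1]
  have hsub : Finset.Ico (s - min s y) (min s x + 1) ⊆ Finset.range (x + 1) := by
    intro u hu
    rw [Finset.mem_Ico] at hu
    rw [Finset.mem_range]
    omega
  rw [← Finset.sum_subset hsub (fun u hu hnot => ?_)]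
  swap
  · rw [Finset.mem_range] at hu
    rw [if_neg]
    intro hcond
    exact hnot (Finset.mem_Ico.2 (by omega))
  have step2 : ∀ u ∈ Finset.Ico (s - min s y) (min s x + 1),
      (if u ≤ s ∧ s - u ≤ y then p ^ min u (y - (s - u)) else 0)
      = p ^ (u - (s - min s y)) := by
    intro u hu
    rw [Finset.mem_Ico] at hu
    rw [if_pos (by omega)]
    congr 1
    omega
  rw [Finset.sum_congr rfl step2, Finset.sum_Ico_eq_sum_range]
  have hlen : min s x + 1 - (s - min s y) = min s x + min s y - s + 1 := by omega
  rw [hlen]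
  refine Finset.sum_congr rfl fun k _ => ?_
  congr 1
  omega

lemma aux1 (q : ℤ) (n : ℕ) :
    ∑ s ∈ Finset.range n, (q ^ (s + 1) - 1) * (q ^ s * (q ^ 2 - 1))
      = (q ^ (2 * n) - 1) * q - (q ^ n - 1) * (q + 1) := by
  induction n with
  | zero => simp
  | succ n ih =>
    rw [Finset.sum_range_succ, ih]
    ring

lemma aux2 (q : ℤ) (a n : ℕ) :
    ∑ k ∈ Finset.range n, (q ^ (a + 1) - 1) * (q ^ (a + k) * (q ^ 2 - 1))
      = (q ^ (a + 1) - 1) * (q + 1) * (q ^ (a + n) - q ^ a) := by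
  induction n with
  | zero => simp
  | succ n ih =>
    rw [Finset.sum_range_succ, ih]
    ring

lemma aux3 (q : ℤ) (E a n : ℕ) :
    ∑ k ∈ Finset.range n, (q ^ E - q ^ (a + k)) * (q ^ 2 - 1)
      = (n : ℤ) * q ^ E * (q ^ 2 - 1) - (q ^ (a + n) - q ^ a) * (q + 1) := by
  induction n with
  | zero => simp
  | succ n ih =>
    rw [Finset.sum_range_succ, ih]
    push_cast
    ring


lemma final_arith (p x y b : ℕ) (hx : 1 ≤ x) (hxy : x ≤ y) (hyb : y < b) (hbxy : b ≤ x + y) :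
    ((∑ s ∈ Finset.range (x + y + 1), (if s ≤ b then p ^ s else 0) *
        ∑ j ∈ Finset.range (min s x + min s y - s + 1), p ^ j : ℕ) : ℤ)
      * (((p : ℤ) - 1) * ((p : ℤ) ^ 2 - 1))
      = ((b : ℤ) - (y : ℤ) + 1) * (p : ℤ) ^ (x + y + 3) + (p : ℤ) ^ (x + y + 2)
        - ((b : ℤ) - (y : ℤ)) * (p : ℤ) ^ (x + y + 1) - (p : ℤ) ^ (2 * x + 2)
        - (p : ℤ) ^ (b + 2) - (p : ℤ) ^ (b + 1) + 1 := by
  push_cast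
  set q : ℤ := (p : ℤ) with hq
  have key : ∀ n : ℕ, (∑ j ∈ Finset.range n, q ^ j) * (q - 1) = q ^ n - 1 :=
    fun n => geom_sum_mul q n
  have hsub : Finset.range (b + 1) ⊆ Finset.range (x + y + 1) := by
    intro s hs
    rw [Finset.mem_range] at *
    omega
  rw [← Finset.sum_subset hsub (fun s h1 h2 => by
    rw [Finset.mem_range] at h1 h2
    rw [if_neg (by omega), zero_mul])]
  have hdropif : ∀ s ∈ Finset.range (b + 1),
      (if s ≤ b then q ^ s else 0) * (∑ j ∈ Finset.range (min s x + min s y - s + 1), q ^ j)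
      = q ^ s * (∑ j ∈ Finset.range (min s x + min s y - s + 1), q ^ j) := by
    intro s hs
    rw [Finset.mem_range] at hs
    rw [if_pos (by omega)]
  rw [Finset.sum_congr rfl hdropif, Finset.sum_mul]
  have hterm : ∀ s : ℕ,
      (q ^ s * (∑ j ∈ Finset.range (min s x + min s y - s + 1), q ^ j))
          * ((q - 1) * (q ^ 2 - 1))
      = (q ^ (min s x + min s y - s + 1) - 1) * (q ^ s * (q ^ 2 - 1)) :=
    fun s => by
      calc (q ^ s * (∑ j ∈ Finset.range (min s x + min s y - s + 1), q ^ j))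
            * ((q - 1) * (q ^ 2 - 1))
          = ((∑ j ∈ Finset.range (min s x + min s y - s + 1), q ^ j) * (q - 1))
            * (q ^ s * (q ^ 2 - 1)) := by ring
        _ = (q ^ (min s x + min s y - s + 1) - 1) * (q ^ s * (q ^ 2 - 1)) := by rw [key]
  rw [Finset.sum_congr rfl fun s _ => hterm s]
  rw [Finset.range_eq_Ico,
    ← Finset.sum_Ico_consecutive _ (Nat.zero_le x) (by omega : x ≤ b + 1),
    ← Finset.sum_Ico_consecutive _ (by omega : x ≤ y + 1) (by omega : y + 1 ≤ b + 1)]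
  -- piece 1
  have hp1 : ∑ s ∈ Finset.Ico 0 x,
      (q ^ (min s x + min s y - s + 1) - 1) * (q ^ s * (q ^ 2 - 1))
      = (q ^ (2 * x) - 1) * q - (q ^ x - 1) * (q + 1) := by
    rw [← Finset.range_eq_Ico]
    have h1 : ∀ s ∈ Finset.range x,
        (q ^ (min s x + min s y - s + 1) - 1) * (q ^ s * (q ^ 2 - 1))
        = (q ^ (s + 1) - 1) * (q ^ s * (q ^ 2 - 1)) := by
      intro s hs
      rw [Finset.mem_range] at hs
      rw [show min s x + min s y - s + 1 = s + 1 by omega]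
    rw [Finset.sum_congr rfl h1, aux1]
  -- piece 2
  have hp2 : ∑ s ∈ Finset.Ico x (y + 1),
      (q ^ (min s x + min s y - s + 1) - 1) * (q ^ s * (q ^ 2 - 1))
      = (q ^ (x + 1) - 1) * (q + 1) * (q ^ (y + 1) - q ^ x) := by
    rw [Finset.sum_Ico_eq_sum_range]
    have h1 : ∀ k ∈ Finset.range (y + 1 - x),
        (q ^ (min (x + k) x + min (x + k) y - (x + k) + 1) - 1) * (q ^ (x + k) * (q ^ 2 - 1))
        = (q ^ (x + 1) - 1) * (q ^ (x + k) * (q ^ 2 - 1)) := by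
      intro k hk
      rw [Finset.mem_range] at hk
      rw [show min (x + k) x + min (x + k) y - (x + k) + 1 = x + 1 by omega]
    rw [Finset.sum_congr rfl h1, aux2]
    rw [show x + (y + 1 - x) = y + 1 by omega]
  -- piece 3
  have hp3 : ∑ s ∈ Finset.Ico (y + 1) (b + 1),
      (q ^ (min s x + min s y - s + 1) - 1) * (q ^ s * (q ^ 2 - 1))
      = ((b : ℤ) - (y : ℤ)) * q ^ (x + y + 1) * (q ^ 2 - 1)
        - (q ^ (b + 1) - q ^ (y + 1)) * (q + 1) := by
    rw [Finset.sum_Ico_eq_sum_range]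
    have h1 : ∀ k ∈ Finset.range (b + 1 - (y + 1)),
        (q ^ (min (y + 1 + k) x + min (y + 1 + k) y - (y + 1 + k) + 1) - 1)
            * (q ^ (y + 1 + k) * (q ^ 2 - 1))
        = (q ^ (x + y + 1) - q ^ (y + 1 + k)) * (q ^ 2 - 1) := by
      intro k hk
      rw [Finset.mem_range] at hk
      rw [show min (y + 1 + k) x + min (y + 1 + k) y - (y + 1 + k) + 1
          = x - k by omega]
      rw [show x + y + 1 = (x - k) + (y + 1 + k) by omega, pow_add]
      ring
    rw [Finset.sum_congr rfl h1, aux3]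
    rw [show (y + 1) + (b + 1 - (y + 1)) = b + 1 by omega,
      show b + 1 - (y + 1) = b - y by omega, Nat.cast_sub (by omega : y ≤ b)]
  rw [hp1, hp2, hp3]
  -- final polynomial identity
  obtain ⟨c, rfl⟩ : ∃ c, b = y + c := ⟨b - y, by omega⟩
  obtain ⟨w, rfl⟩ : ∃ w, y = x + w := ⟨y - x, by omega⟩
  push_cast
  ring


end Rank3C4

/-- Case 4 (`a₂ < b ≤ a₁ + a₂ ≤ a₃`) of the rank-3 subgroup counting theorem. -/
theorem rank3_case4 (p a₁ a₂ a₃ b : ℕ) (hp : p.Prime)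
    (ha₁ : 1 ≤ a₁) (h12 : a₁ ≤ a₂) (h23 : a₂ ≤ a₃)
    (hb1 : a₂ < b) (hb2 : b ≤ a₁ + a₂) (hb3 : a₁ + a₂ ≤ a₃) :
    (Nat.card {H : AddSubgroup (ZMod (p ^ a₁) × ZMod (p ^ a₂) × ZMod (p ^ a₃)) //
        Nat.card H = p ^ b} : ℤ) * (((p : ℤ) - 1) * ((p : ℤ) ^ 2 - 1)) =
      ((b : ℤ) - (a₂ : ℤ) + 1) * (p : ℤ) ^ (a₁ + a₂ + 3) + (p : ℤ) ^ (a₁ + a₂ + 2)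
        - ((b : ℤ) - (a₂ : ℤ)) * (p : ℤ) ^ (a₁ + a₂ + 1) - (p : ℤ) ^ (2 * a₁ + 2)
        - (p : ℤ) ^ (b + 2) - (p : ℤ) ^ (b + 1) + 1 := by
  haveI : NeZero (p ^ a₁) := ⟨pow_ne_zero _ hp.pos.ne'⟩
  haveI : NeZero (p ^ a₂) := ⟨pow_ne_zero _ hp.pos.ne'⟩
  haveI : NeZero (p ^ a₃) := ⟨pow_ne_zero _ hp.pos.ne'⟩
  have t1 : Nat.card {H : AddSubgroup (ZMod (p ^ a₁) × ZMod (p ^ a₂) × ZMod (p ^ a₃)) //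
        Nat.card H = p ^ b}
      = Nat.card {H : AddSubgroup ((ZMod (p ^ a₁) × ZMod (p ^ a₂)) × ZMod (p ^ a₃)) //
        Nat.card H = p ^ b} :=
    Rank3C4.card_subgroups_congr (AddEquiv.prodAssoc).symm _
  rw [t1, Rank3C4.rank3_reduce p a₁ a₂ a₃ b hp hb3 (le_trans hb2 hb3),
    Rank3C4.group_by_card p a₁ a₂ b hp]
  have t2 : ∀ s ∈ Finset.range (a₁ + a₂ + 1),
      (if s ≤ b then p ^ s else 0) *
          Nat.card {P : AddSubgroup (ZMod (p ^ a₁) × ZMod (p ^ a₂)) // Nat.card P = p ^ s}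
      = (if s ≤ b then p ^ s else 0) *
          ∑ j ∈ Finset.range (min s a₁ + min s a₂ - s + 1), p ^ j := by
    intro s hs
    rw [Finset.mem_range] at hs
    rw [Rank3C4.rank2_count p a₁ a₂ hp s]
    congr 1
    rw [Fin.sum_univ_eq_sum_range
      (fun u => ∑ d : Fin (a₂ + 1), if u + (d : ℕ) = s then p ^ min u (a₂ - (d : ℕ)) else 0)
      (a₁ + 1)]
    rw [Finset.sum_congr rfl fun u _ => Fin.sum_univ_eq_sum_range
      (fun d => if u + d = s then p ^ min u (a₂ - d) else 0) (a₂ + 1)]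
    exact Rank3C4.inner_eval p a₁ a₂ s (by omega)
  rw [Finset.sum_congr rfl t2]
  exact Rank3C4.final_arith p a₁ a₂ b ha₁ h12 hb1 hb2
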